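/- Let I = (L(u,v)) be a lexsegment ideal, with u = x_1x_{l+1}^{a_{l+1}}···x_n^{a_n} and v = x_l·x_n^{d-1} for some 2 ≤ l ≤ n-1 (the shape of a non-completely lexsegment ideal with linear resolution). Then the monomial m = x_l^d·u/x_1 satisfies m ∉ I^2 and x_i·m ∈ I^2 for all 1 ≤ i ≤ n; hence (x_1,...,x_n) ∈ Ass(S/I^2) and depth(S/I^2) = 0. -/

import Mathlib

open MvPolynomial

noncomputable section

namespace LexPaper

/-- total degree of an exponent vector -/
def deg {sigma : Type*} (a : sigma  →₀  ℕ) : ℕ := a.sum fun _ e => e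

/-- the monomial x^a as an element of the polynomial ring -/
def mon (k : Type*) [Field k] {sigma : Type*} (a : sigma  →₀  ℕ) : MvPolynomial sigma k :=
  MvPolynomial.monomial a 1

/-- `lexLe a b` : a ≤_lex b, where x_1 > x_2 > ... > x_n (index 0 is the largest variable). -/
def lexLe {n : ℕ} (a b : Fin n  →₀  ℕ) : Prop := toLex a ≤ toLex b

/-- `lexLt a b` : a <_lex b. -/
def lexLt {n : ℕ} (a b : Fin n  →₀  ℕ) : Prop := toLex a < toLex b

/-- the lexsegment set L(u,v) : all exponent vectors of degree d between v and u in lex order -/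
def lexSeg {n : ℕ} (d : ℕ) (u v : Fin n  →₀  ℕ) : Set (Fin n  →₀  ℕ) :=
  {m | deg m = d  ∧  lexLe v m  ∧  lexLe m u}

/-- the lexsegment ideal (L(u,v)) -/
def lexIdeal (k : Type*) [Field k] {n : ℕ} (d : ℕ) (u v : Fin n  →₀  ℕ) :
    Ideal (MvPolynomial (Fin n) k) :=
  Ideal.span (mon k '' lexSeg d u v)

/-- the maximal graded ideal (x_1, ..., x_n) -/
def mMax (k : Type*) [Field k] (n : ℕ) : Ideal (MvPolynomial (Fin n) k) :=
  Ideal.span (Set.range (X : Fin n -> MvPolynomial (Fin n) k))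

/-- depth of S/I: the supremum of lengths of regular sequences on S/I consisting of
elements of the maximal graded ideal -/
def quotDepth (k : Type*) [Field k] {n : ℕ} (I : Ideal (MvPolynomial (Fin n) k)) : ℕ :=
  sSup {r : ℕ | ∃ rs : List (MvPolynomial (Fin n) k), rs.length = r  ∧ 
    (∀ x ∈ rs, x ∈ mMax k n)  ∧  RingTheory.Sequence.IsRegular (MvPolynomial (Fin n) k ⧸ I) rs}


-- auxiliary lemmas

lemma deg_eq_sum {n : ℕ} (a : Fin n →₀ ℕ) : deg a = ∑ j, a j :=
  Finsupp.sum_fintype _ _ (fun _ => rfl)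

lemma deg_add {sigma : Type*} (a b : sigma →₀ ℕ) : deg (a + b) = deg a + deg b :=
  Finsupp.sum_add_index' (fun _ => rfl) (fun _ _ _ => rfl)

lemma deg_single {sigma : Type*} (i : sigma) (c : ℕ) : deg (Finsupp.single i c) = c := by
  simp [deg]

lemma deg_mono {n : ℕ} {a b : Fin n →₀ ℕ} (h : a ≤ b) : deg a ≤ deg b := by
  rw [deg_eq_sum, deg_eq_sum]
  exact Finset.sum_le_sum fun i _ => h i

lemma mon_mul (k : Type*) [Field k] {sigma : Type*} (a b : sigma →₀ ℕ) :
    mon k a * mon k b = mon k (a + b) := by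
  simp [mon, monomial_mul]

lemma X_eq_mon (k : Type*) [Field k] {n : ℕ} (i : Fin n) :
    (X i : MvPolynomial (Fin n) k) = mon k (Finsupp.single i 1) := rfl

lemma lexLt_of {n : ℕ} {a b : Fin n →₀ ℕ} (i : Fin n)
    (hj : ∀ j, j < i → a j = b j) (hi : a i < b i) : lexLt a b :=
  Finsupp.Lex.lt_iff.mpr ⟨i, hj, hi⟩

lemma lexLe_of {n : ℕ} {a b : Fin n →₀ ℕ} (i : Fin n)
    (hj : ∀ j, j < i → a j = b j) (hi : a i < b i) : lexLe a b :=
  le_of_lt (lexLt_of i hj hi)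

/-- v = x_p x_q^{d-1} is lex-minimal among degree-d vectors supported in [p,·] with
positive exponent at p, where q is the top index. -/
lemma v_min {n d : ℕ} (hd : 2 ≤ d) {p q : Fin n} (hpq : p < q) (hq : ∀ j : Fin n, j ≤ q)
    (w : Fin n →₀ ℕ) (hw : deg w = d) (h0 : ∀ j, j < p → w j = 0) (h1 : 1 ≤ w p) :
    lexLe (Finsupp.single p 1 + Finsupp.single q (d - 1)) w := by
  set v : Fin n →₀ ℕ := Finsupp.single p 1 + Finsupp.single q (d - 1) with hv
  by_contra hcon
  have hlt : toLex w < toLex v := lt_of_not_ge hcon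
  obtain ⟨i, hj, hi⟩ := Finsupp.Lex.lt_iff.mp hlt
  simp only [ofLex_toLex] at hj hi
  have hpq' : q ≠ p := hpq.ne'
  have hip : i = p ∨ i = q := by
    by_contra hc
    push_neg at hc
    rw [hv] at hi
    simp [Finsupp.single_apply, Ne.symm hc.1, Ne.symm hc.2] at hi
  rcases hip with h | h
  · rw [h] at hi
    rw [hv] at hi
    simp [Finsupp.single_apply, hpq'] at hi
    omega
  · rw [h] at hj hi
    have hwp : w p = 1 := by
      have h2 := hj p hpq
      rw [hv] at h2
      simp [Finsupp.single_apply, hpq'] at h2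
      exact h2
    rw [hv] at hi
    simp [Finsupp.single_apply, hpq.ne] at hi
    have hdw : deg w = w p + w q := by
      rw [deg_eq_sum]
      rw [← Finset.sum_subset (Finset.subset_univ ({p, q} : Finset (Fin n)))]
      · rw [Finset.sum_pair hpq.ne]
      · intro j _ hjmem
        simp only [Finset.mem_insert, Finset.mem_singleton] at hjmem
        push_neg at hjmem
        have hji : j < q := lt_of_le_of_ne (hq j) hjmem.2
        have h2 := hj j hji
        rw [hv] at h2
        simp [Finsupp.single_apply, Ne.symm hjmem.1, Ne.symm hjmem.2] at h2
        exact h2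
    omega

lemma mem_mMax_iff {k : Type*} [Field k] {n : ℕ} (f : MvPolynomial (Fin n) k) :
    f ∈ mMax k n ↔ constantCoeff f = 0 := by
  rw [mMax, ← Set.image_univ, mem_ideal_span_X_image, constantCoeff_eq]
  constructor
  · intro h
    by_contra hc
    obtain ⟨i, _, hi⟩ := h 0 (mem_support_iff.mpr hc)
    simp at hi
  · intro h m hm
    have hm0 : m ≠ 0 := by
      rintro rfl
      exact (mem_support_iff.mp hm) h
    obtain ⟨i, hi⟩ := Finsupp.ne_iff.mp hm0
    exact ⟨i, Set.mem_univ i, by simpa using hi⟩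

lemma mMax_eq_ker {k : Type*} [Field k] {n : ℕ} :
    mMax k n = RingHom.ker (constantCoeff : MvPolynomial (Fin n) k →+* k) := by
  ext f
  rw [mem_mMax_iff, RingHom.mem_ker]

lemma mMax_isPrime {k : Type*} [Field k] {n : ℕ} : (mMax k n).IsPrime := by
  rw [mMax_eq_ker]
  exact RingHom.ker_isPrime _

lemma sq_lexIdeal {k : Type*} [Field k] {n d : ℕ} (u v : Fin n →₀ ℕ) :
    (lexIdeal k d u v) ^ 2 =
      Ideal.span ((fun s => monomial s (1 : k)) ''
        Set.image2 (· + ·) (lexSeg d u v) (lexSeg d u v)) := by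
  rw [sq, lexIdeal, Ideal.span_mul_span']
  congr 1
  rw [← Set.image2_mul, Set.image2_image_left, Set.image2_image_right]
  simp only [mon_mul]
  rw [← Set.image_image2]
  rfl



theorem statement14 {k : Type*} [Field k] {n d l : ℕ} (hn : 3 ≤ n) (hd : 2 ≤ d)
    (hl2 : 2 ≤ l) (hln : l ≤ n - 1)
    (u v : Fin n →₀ ℕ) (hu : deg u = d) (hv : deg v = d) (huv : lexLe v u)
    (hnu1 : u (⟨0, by omega⟩ : Fin n) = 1)
    (humid : ∀ j : Fin n, 1 ≤ (j:ℕ) → (j:ℕ) ≤ l - 1 → u j = 0)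
    (hveq : v = Finsupp.single (⟨l-1, by omega⟩ : Fin n) 1 + Finsupp.single (⟨n-1, by omega⟩ : Fin n) (d-1)) :
    mon k (Finsupp.single (⟨l-1, by omega⟩ : Fin n) d + u - Finsupp.single (⟨0, by omega⟩ : Fin n) 1)
        ∉ (lexIdeal k d u v) ^ 2 ∧
    (∀ i : Fin n, X i * mon k (Finsupp.single (⟨l-1, by omega⟩ : Fin n) d + u - Finsupp.single (⟨0, by omega⟩ : Fin n) 1)
        ∈ (lexIdeal k d u v) ^ 2) ∧
    mMax k n ∈ associatedPrimes (MvPolynomial (Fin n) k) (MvPolynomial (Fin n) k ⧸ ((lexIdeal k d u v) ^ 2)) ∧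
    quotDepth k ((lexIdeal k d u v) ^ 2) = 0 := by
  classical
  have hl1 : l - 1 < n := by omega
  have h0n : 0 < n := by omega
  have hn1 : n - 1 < n := by omega
  set p : Fin n := ⟨l - 1, hl1⟩ with hpdef
  set z : Fin n := ⟨0, h0n⟩ with hzdef
  set q : Fin n := ⟨n - 1, hn1⟩ with hqdef
  have hpval : (p : ℕ) = l - 1 := rfl
  have hzval : (z : ℕ) = 0 := rfl
  have hqval : (q : ℕ) = n - 1 := rfl
  have hpz : p ≠ z := Fin.ne_of_val_ne (by omega)
  have hzp : z ≠ p := Fin.ne_of_val_ne (by omega)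
  have hpq : p < q := by rw [Fin.lt_def]; omega
  have hqtop : ∀ j : Fin n, j ≤ q := by
    intro j; rw [Fin.le_def]; have := j.isLt; omega
  have hzbot : ∀ j : Fin n, ¬ j < z := by
    intro j hj; rw [Fin.lt_def] at hj; omega
  have huz : u z = 1 := hnu1
  have hup : u p = 0 := humid p (by omega) (by omega)
  have hveq' : v = Finsupp.single p 1 + Finsupp.single q (d - 1) := hveq
  set L := lexSeg d u v with hL
  set J := (lexIdeal k d u v) ^ 2 with hJ
  set w : Fin n →₀ ℕ := Finsupp.single p d + u - Finsupp.single z 1 with hwdef0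
  set u' : Fin n →₀ ℕ := u - Finsupp.single z 1 with hu'def
  have hle1 : Finsupp.single z (1:ℕ) ≤ u := by
    rw [Finsupp.le_def]
    intro j
    rcases eq_or_ne z j with h | h
    · rw [← h]; simp [huz]
    · simp [Finsupp.single_apply, h]
  have hle2 : Finsupp.single z (1:ℕ) ≤ Finsupp.single p d + u := le_trans hle1 le_add_self
  have hu'add : u' + Finsupp.single z 1 = u := tsub_add_cancel_of_le hle1
  have hwdef : w = Finsupp.single p d + u' := add_tsub_assoc_of_le hle1 _
  have hwz : w + Finsupp.single z 1 = Finsupp.single p d + u := tsub_add_cancel_of_le hle2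
  have hu'z : u' z = 0 := by
    rw [hu'def, Finsupp.tsub_apply, huz]; simp
  have hu'p : u' p = 0 := by
    rw [hu'def, Finsupp.tsub_apply, hup]; simp
  have hu'j : ∀ j : Fin n, (j : ℕ) < l - 1 → u' j = 0 := by
    intro j hj
    rcases eq_or_ne z j with h | h
    · rw [← h]; exact hu'z
    · have hj0 : (1:ℕ) ≤ (j:ℕ) := by
        rcases Nat.eq_zero_or_pos (j:ℕ) with h0 | h0
        · exact absurd (Fin.ext (by omega : (z:ℕ) = (j:ℕ))) h
        · exact h0
      have : u j = 0 := humid j hj0 (by omega)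
      rw [hu'def, Finsupp.tsub_apply, this]; simp
  have hdu' : deg u' = d - 1 := by
    have := congrArg deg hu'add
    rw [deg_add, deg_single, hu] at this
    omega
  have hdw : deg w = d + (d - 1) := by
    rw [hwdef, deg_add, deg_single, hdu']
  -- lexseg memberships
  have huseg : u ∈ L := ⟨hu, huv, le_rfl⟩
  have hxpd : Finsupp.single p d ∈ L := by
    refine ⟨deg_single _ _, ?_, ?_⟩
    · rw [hveq']
      refine v_min hd hpq hqtop _ (deg_single p d) ?_ ?_
      · intro j hj
        simp [Finsupp.single_apply, (ne_of_gt hj : p ≠ j)]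
      · simp [Finsupp.single_apply]; omega
    · refine lexLe_of z (fun j hj => absurd hj (hzbot j)) ?_
      rw [huz]
      simp [Finsupp.single_apply, hpz]
  have haseg : ∀ i : Fin n, i ≠ z →
      Finsupp.single i 1 + Finsupp.single p (d - 1) ∈ L := by
    intro i hi
    refine ⟨by rw [deg_add, deg_single, deg_single]; omega, ?_, ?_⟩
    · rw [hveq']
      by_cases hcase : (i : ℕ) < l - 1
      · -- i strictly above p in lex order: first difference at i
        have hiq : i ≠ q := Fin.ne_of_val_ne (by omega)
        have hip : i ≠ p := Fin.ne_of_val_ne (by omega)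
        refine lexLe_of i ?_ ?_
        · intro j hj
          rw [Fin.lt_def] at hj
          have hjp : p ≠ j := Fin.ne_of_val_ne (by omega)
          have hjq : q ≠ j := Fin.ne_of_val_ne (by omega)
          have hji : i ≠ j := Fin.ne_of_val_ne (by omega)
          simp [Finsupp.single_apply, hjp, hjq, hji]
        · simp [Finsupp.single_apply, Ne.symm hip, Ne.symm hiq, hip]
      · refine v_min hd hpq hqtop _ (by rw [deg_add, deg_single, deg_single]; omega) ?_ ?_
        · intro j hj
          rw [Fin.lt_def] at hj
          have hji : i ≠ j := Fin.ne_of_val_ne (by omega)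
          have hjp : p ≠ j := (ne_of_gt hj)
          simp [Finsupp.single_apply, hji, hjp]
        · simp [Finsupp.single_apply]
          rcases eq_or_ne i p with h | h <;> simp [h] <;> omega
    · refine lexLe_of z (fun j hj => absurd hj (hzbot j)) ?_
      rw [huz]
      simp [Finsupp.single_apply, hpz, hi]
  have hbseg : Finsupp.single p 1 + u' ∈ L := by
    refine ⟨by rw [deg_add, deg_single, hdu']; omega, ?_, ?_⟩
    · rw [hveq']
      refine v_min hd hpq hqtop _ (by rw [deg_add, deg_single, hdu']; omega) ?_ ?_
      · intro j hj
        rw [Fin.lt_def] at hj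
        have hjp : p ≠ j := (ne_of_gt hj)
        have : u' j = 0 := hu'j j (by omega)
        simp [Finsupp.single_apply, hjp, this]
      · simp [Finsupp.single_apply]
    · refine lexLe_of z (fun j hj => absurd hj (hzbot j)) ?_
      rw [huz]
      simp [Finsupp.single_apply, hpz, hu'z]
  -- membership of generators in the ideal
  have hgen : ∀ a ∈ L, mon k a ∈ lexIdeal k d u v := by
    intro a ha
    exact Ideal.subset_span ⟨a, ha, rfl⟩
  -- Part 2 : x_i * m ∈ I²
  have hXmem : ∀ i : Fin n, X i * mon k w ∈ J := by
    intro i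
    rw [X_eq_mon, mon_mul]
    rcases eq_or_ne i z with h | h
    · rw [h]
      have heq : Finsupp.single z 1 + w = Finsupp.single p d + u := by
        rw [add_comm]; exact hwz
      rw [heq, ← mon_mul, hJ, pow_two]
      exact Ideal.mul_mem_mul (hgen _ hxpd) (hgen _ huseg)
    · have hsplit : Finsupp.single i 1 + w =
          (Finsupp.single i 1 + Finsupp.single p (d - 1)) + (Finsupp.single p 1 + u') := by
        rw [hwdef]
        have hpd : Finsupp.single p d = Finsupp.single p (d - 1) + Finsupp.single p 1 := by
          rw [← Finsupp.single_add]; congr 1; omega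
        rw [hpd]
        abel
      rw [hsplit, ← mon_mul, hJ, pow_two]
      exact Ideal.mul_mem_mul (hgen _ (haseg i h)) (hgen _ hbseg)
  -- Part 1 : m ∉ I²
  have hnotmem : mon k w ∉ J := by
    intro hmem
    rw [hJ, sq_lexIdeal] at hmem
    rw [mem_ideal_span_monomial_image] at hmem
    have hsupp : w ∈ (mon k w).support := by
      rw [mon]
      rw [support_monomial, if_neg (one_ne_zero)]
      exact Finset.mem_singleton_self w
    obtain ⟨s, hs, hsle⟩ := hmem w hsupp
    obtain ⟨a, ha, b, hb, rfl⟩ := Set.mem_image2.mp hs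
    have hmono := deg_mono hsle
    rw [deg_add, ha.1, hb.1, hdw] at hmono
    omega
  -- quotient element
  set mbar : MvPolynomial (Fin n) k ⧸ J := Ideal.Quotient.mk J (mon k w) with hmbar
  have hsmul : ∀ f : MvPolynomial (Fin n) k, f • mbar = Ideal.Quotient.mk J (f * mon k w) := by
    intro f
    rw [hmbar, ← smul_eq_mul (α := MvPolynomial (Fin n) k)]
    exact (Submodule.Quotient.mk_smul J f (mon k w)).symm
  have hann : ∀ f : MvPolynomial (Fin n) k, f ∈ mMax k n → f * mon k w ∈ J := by
    intro f hf
    refine Submodule.span_induction (p := fun x _ => x * mon k w ∈ J) ?_ ?_ ?_ ?_ hf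
    · rintro x ⟨i, rfl⟩
      exact hXmem i
    · show (0 : MvPolynomial (Fin n) k) * mon k w ∈ J
      rw [zero_mul]; exact zero_mem J
    · intro x y hx hy hx' hy'
      show (x + y) * mon k w ∈ J
      rw [add_mul]; exact add_mem hx' hy'
    · intro r x hx hx'
      show (r • x) * mon k w ∈ J
      rw [smul_eq_mul, mul_assoc]
      exact Ideal.mul_mem_left _ _ hx'
  have hann2 : ∀ f : MvPolynomial (Fin n) k, f * mon k w ∈ J → f ∈ mMax k n := by
    intro f hf
    rw [mem_mMax_iff]
    by_contra hc
    have hsub : f - C (constantCoeff f) ∈ mMax k n := by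
      rw [mem_mMax_iff]; simp
    have h2 : (f - C (constantCoeff f)) * mon k w ∈ J := hann _ hsub
    have h3 : C (constantCoeff f) * mon k w ∈ J := by
      have heq : C (constantCoeff f) * mon k w
          = f * mon k w - (f - C (constantCoeff f)) * mon k w := by ring
      rw [heq]; exact sub_mem hf h2
    have h4 : mon k w ∈ J := by
      have heq : mon k w = C (constantCoeff f)⁻¹ * (C (constantCoeff f) * mon k w) := by
        rw [← mul_assoc, ← C_mul, inv_mul_cancel₀ hc, C_1, one_mul]
      rw [heq]; exact Ideal.mul_mem_left _ _ h3
    exact hnotmem h4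
  -- Part 3 : associated prime
  have hassoc : mMax k n ∈ associatedPrimes (MvPolynomial (Fin n) k)
      (MvPolynomial (Fin n) k ⧸ J) := by
    refine (isAssociatedPrime_iff).mpr ⟨mMax_isPrime, mbar, ?_⟩
    ext f
    rw [Submodule.mem_colon_singleton, Submodule.mem_bot]
    constructor
    · intro hf
      rw [hsmul, Ideal.Quotient.eq_zero_iff_mem]
      exact hann f hf
    · intro hf
      rw [hsmul, Ideal.Quotient.eq_zero_iff_mem] at hf
      exact hann2 f hf
  -- Part 4 : depth zero
  have hJne : J ≠ ⊤ := fun h => hnotmem (h ▸ Submodule.mem_top)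
  have hnontriv : Nontrivial (MvPolynomial (Fin n) k ⧸ J) := Ideal.Quotient.nontrivial_iff.mpr hJne
  have hdepth : quotDepth k J = 0 := by
    have hset : {r : ℕ | ∃ rs : List (MvPolynomial (Fin n) k), rs.length = r ∧
        (∀ x ∈ rs, x ∈ mMax k n) ∧
        RingTheory.Sequence.IsRegular (MvPolynomial (Fin n) k ⧸ J) rs} = {0} := by
      ext r
      simp only [Set.mem_setOf_eq, Set.mem_singleton_iff]
      constructor
      · rintro ⟨rs, hlen, hmem, hreg⟩
        cases rs with
        | nil => simpa using hlen.symm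
        | cons x t =>
          exfalso
          have hx := hmem x (List.mem_cons_self)
          have hreg1 : IsSMulRegular (MvPolynomial (Fin n) k ⧸ J) x :=
            ((RingTheory.Sequence.isRegular_cons_iff _ _ _).mp hreg).1
          have hzero : x • mbar = 0 := by
            rw [hsmul, Ideal.Quotient.eq_zero_iff_mem]
            exact hann x hx
          have hne : mbar ≠ 0 := by
            rw [hmbar, Ne, Ideal.Quotient.eq_zero_iff_mem]
            exact hnotmem
          exact hne (hreg1 (show x • mbar = x • (0 : MvPolynomial (Fin n) k ⧸ J) by
            rw [hzero, smul_zero]))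
      · rintro rfl
        exact ⟨[], rfl, by simp, RingTheory.Sequence.IsRegular.nil _ _⟩
    rw [quotDepth, hset, csSup_singleton]
  exact ⟨hnotmem, hXmem, hassoc, hdepth⟩

end LexPaper
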